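/- Let (E,d) be a separable metric space, Θ a parameter set, Ω a measurable space carrying a family of probability measures (P_θ)_{θ∈Θ} with expectations E_θ, and let X_n, Y_n, X : Ω → E (n ∈ ℕ) be Borel measurable. Assume: (a) for every ε > 0, sup_{θ∈Θ} P_θ( d(X_n, Y_n) > ε ) → 0 as n → ∞; and (b) sup_{θ∈Θ} d_BL^θ(X_n, X) → 0 as n → ∞. Then sup_{θ∈Θ} d_BL^θ(Y_n, X) → 0 as n → ∞. -/

import Mathlib

open MeasureTheory
open scoped ENNReal

/-- The unit ball `F_BL(E)` of bounded Lipschitz functions: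
`sup |f| + Lip(f) ≤ 1`. -/
def FBL (E : Type*) [PseudoMetricSpace E] : Set (E → ℝ) :=
  {f | ∃ a L : ℝ, 0 ≤ a ∧ 0 ≤ L ∧ a + L ≤ 1 ∧ (∀ x, |f x| ≤ a) ∧
    ∀ x y, |f x - f y| ≤ L * dist x y}

/-- If `d(X_n, Y_n) → 0` in probability uniformly over `θ` and `X_n → X` weakly uniformly
over `θ` (in dual bounded Lipschitz distance), then `Y_n → X` weakly uniformly over `θ`. -/
theorem stmt14 {E Ω Θ : Type*} [MetricSpace E] [TopologicalSpace.SeparableSpace E]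
    [MeasurableSpace E] [BorelSpace E] [MeasurableSpace Ω]
    (P : Θ → Measure Ω) (hP : ∀ θ, IsProbabilityMeasure (P θ))
    (X Y : ℕ → Ω → E) (X₀ : Ω → E)
    (hX : ∀ n, Measurable (X n)) (hY : ∀ n, Measurable (Y n)) (hX₀ : Measurable X₀)
    (hd : ∀ ε : ℝ, 0 < ε → ∀ ε' : ℝ≥0∞, 0 < ε' → ∃ N, ∀ n ≥ N, ∀ θ,
      P θ {ω | ε < dist (X n ω) (Y n ω)} ≤ ε')
    (hconv : ∀ ε : ℝ, 0 < ε → ∃ N, ∀ n ≥ N, ∀ θ, ∀ f ∈ FBL E,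
      |(∫ ω, f (X n ω) ∂(P θ)) - (∫ ω, f (X₀ ω) ∂(P θ))| ≤ ε) :
    ∀ ε : ℝ, 0 < ε → ∃ N, ∀ n ≥ N, ∀ θ, ∀ f ∈ FBL E,
      |(∫ ω, f (Y n ω) ∂(P θ)) - (∫ ω, f (X₀ ω) ∂(P θ))| ≤ ε := by
  intro ε hε
  obtain ⟨N₁, hN₁⟩ := hd (ε / 4) (by linarith) (ENNReal.ofReal (ε / 8))
    (by positivity)
  obtain ⟨N₂, hN₂⟩ := hconv (ε / 2) (by linarith)
  refine ⟨max N₁ N₂, fun n hn θ f hf => ?_⟩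
  have h1 := hN₁ n (le_trans (le_max_left _ _) hn) θ
  have h2 := hN₂ n (le_trans (le_max_right _ _) hn) θ f hf
  obtain ⟨a, L, ha, hL, haL, hfa, hfL⟩ := hf
  haveI := hP θ
  haveI : SecondCountableTopology E := UniformSpace.secondCountable_of_separable E
  -- f is Lipschitz hence measurable
  have hflip : LipschitzWith (Real.toNNReal L) f := by
    intro x y
    rw [edist_dist, edist_dist, Real.dist_eq]
    calc ENNReal.ofReal |f x - f y| ≤ ENNReal.ofReal (L * dist x y) :=
          ENNReal.ofReal_le_ofReal (hfL x y)
      _ ≤ _ := by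
          rw [ENNReal.ofReal_mul hL]
          exact mul_le_mul_left (by simp [ENNReal.ofReal]) _
  have hfc : Continuous f := hflip.continuous
  have ha1 : a ≤ 1 := by linarith
  have hL1 : L ≤ 1 := by linarith
  have hint : ∀ (Z : Ω → E), Measurable Z → Integrable (fun ω => f (Z ω)) (P θ) := by
    intro Z hZ
    refine (integrable_const a).mono' ((hfc.measurable.comp hZ).aestronglyMeasurable) ?_
    filter_upwards with ω
    simpa using hfa (Z ω)
  set A : Set Ω := {ω | ε / 4 < dist (X n ω) (Y n ω)} with hA
  have hAm : MeasurableSet A := by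
    have : Measurable fun ω => dist (X n ω) (Y n ω) := (hX n).dist (hY n)
    exact measurableSet_lt measurable_const this
  have hPA : (P θ A).toReal ≤ ε / 8 := by
    have := h1
    calc (P θ A).toReal ≤ (ENNReal.ofReal (ε / 8)).toReal :=
          ENNReal.toReal_mono ENNReal.ofReal_ne_top this
      _ = ε / 8 := ENNReal.toReal_ofReal (by linarith)
  -- key bound
  have key : |(∫ ω, f (Y n ω) ∂(P θ)) - (∫ ω, f (X n ω) ∂(P θ))| ≤ ε / 2 := by
    rw [← integral_sub (hint _ (hY n)) (hint _ (hX n))]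
    have hb : ∀ ω, |f (Y n ω) - f (X n ω)| ≤ A.indicator (fun _ => (2:ℝ)) ω + ε / 4 := by
      intro ω
      by_cases hω : ω ∈ A
      · have := abs_sub (f (Y n ω)) (f (X n ω))
        have h1 := hfa (Y n ω); have h2 := hfa (X n ω)
        simp only [Set.indicator_of_mem hω]
        calc |f (Y n ω) - f (X n ω)| ≤ |f (Y n ω)| + |f (X n ω)| := abs_sub _ _
          _ ≤ 2 + ε / 4 := by linarith
      · have hdist : dist (X n ω) (Y n ω) ≤ ε / 4 := le_of_not_gt hω
        simp only [Set.indicator_of_notMem hω]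
        calc |f (Y n ω) - f (X n ω)| ≤ L * dist (Y n ω) (X n ω) := hfL _ _
          _ ≤ 1 * (ε / 4) := by
              apply mul_le_mul hL1 _ dist_nonneg zero_le_one
              rwa [dist_comm]
          _ = 0 + ε / 4 := by ring
    have hintb : Integrable (fun ω => A.indicator (fun _ => (2:ℝ)) ω + ε / 4) (P θ) :=
      ((integrable_const (2:ℝ)).indicator hAm).add (integrable_const _)
    calc |∫ ω, (f (Y n ω) - f (X n ω)) ∂(P θ)|
        ≤ ∫ ω, |f (Y n ω) - f (X n ω)| ∂(P θ) := by
          simpa [Real.norm_eq_abs] using norm_integral_le_integral_norm (fun ω => f (Y n ω) - f (X n ω)) (μ := P θ)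
      _ ≤ ∫ ω, (A.indicator (fun _ => (2:ℝ)) ω + ε / 4) ∂(P θ) := by
          refine integral_mono ((hint _ (hY n)).sub (hint _ (hX n))).abs hintb hb
      _ = 2 * (P θ A).toReal + ε / 4 := by
          rw [integral_add ((integrable_const (2:ℝ)).indicator hAm) (integrable_const _),
            integral_indicator_const _ hAm, integral_const]
          simp [mul_comm]
          rfl
      _ ≤ 2 * (ε / 8) + ε / 4 := by linarith
      _ = ε / 2 := by ring
  calc |(∫ ω, f (Y n ω) ∂(P θ)) - (∫ ω, f (X₀ ω) ∂(P θ))|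
      ≤ |(∫ ω, f (Y n ω) ∂(P θ)) - (∫ ω, f (X n ω) ∂(P θ))|
        + |(∫ ω, f (X n ω) ∂(P θ)) - (∫ ω, f (X₀ ω) ∂(P θ))| := abs_sub_le _ _ _
    _ ≤ ε / 2 + ε / 2 := add_le_add key h2
    _ = ε := by ring
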